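/- Let σ > 0, let x, δ ∈ ℝ^d with δ ≠ 0, and let β ∈ ℝ. Let S = {z ∈ ℝ^d : ⟨δ, z⟩ ≥ β}, and let h : ℝ^d → [0,1] be any measurable function (representing the acceptance probability of a possibly randomized binary decision rule). If ∫ h dν_{x,σ} ≤ ν_{x,σ}(S), then ∫ h dν_{x+δ,σ} ≤ ν_{x+δ,σ}(S). -/

import Mathlib

open MeasureTheory ProbabilityTheory Real
open scoped NNReal ENNReal

/-- Standard normal CDF. -/
noncomputable def Phi (t : ℝ) : ℝ := ((gaussianReal 0 1) (Set.Iic t)).toReal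

/-- Inverse of the standard normal CDF on `(0,1)`. -/
noncomputable def PhiInv : ℝ → ℝ := Function.invFun Phi

/-- Gaussian measure on `ℝ^d` with mean `m` and covariance `σ² I`
(product of `d` one-dimensional Gaussians). -/
noncomputable def gaussianVec {d : ℕ} (m : EuclideanSpace ℝ (Fin d)) (σ : ℝ) :
    Measure (EuclideanSpace ℝ (Fin d)) :=
  (Measure.pi fun i => gaussianReal (m i) ((σ ^ 2).toNNReal)).map
    (MeasurableEquiv.toLp 2 (Fin d → ℝ))

lemma gaussianReal_shift (m c : ℝ) {v : ℝ≥0} (hv : v ≠ 0) :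
    gaussianReal (m + c) v =
      (gaussianReal m v).withDensity
        (fun t => ENNReal.ofReal (rexp ((c * (t - m) - c ^ 2 / 2) / v))) := by
  rw [gaussianReal_of_var_ne_zero _ hv, gaussianReal_of_var_ne_zero _ hv,
    ← withDensity_mul _ (measurable_gaussianPDF _ _)
      (by fun_prop)]
  congr 1
  ext t
  simp only [Pi.mul_apply, gaussianPDF]
  rw [← ENNReal.ofReal_mul (gaussianPDFReal_nonneg _ _ _)]
  congr 1
  rw [gaussianPDFReal, gaussianPDFReal]
  have hv' : (v : ℝ) ≠ 0 := by exact_mod_cast hv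
  have key : rexp (-(t - m) ^ 2 / (2 * ↑v)) * rexp ((c * (t - m) - c ^ 2 / 2) / ↑v)
      = rexp (-(t - (m + c)) ^ 2 / (2 * ↑v)) := by
    rw [← Real.exp_add]
    congr 1
    field_simp
    ring
  rw [mul_assoc ((√(2 * π * ↑v))⁻¹), key]

lemma lintegral_pi_prod : ∀ {n : ℕ} (μ : Fin n → Measure ℝ), (∀ i, IsProbabilityMeasure (μ i)) →
    ∀ {f : Fin n → ℝ → ℝ≥0∞}, (∀ i, Measurable (f i)) →
    ∫⁻ x, ∏ i, f i (x i) ∂Measure.pi μ = ∏ i, ∫⁻ t, f i t ∂μ i := by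
  intro n
  induction n with
  | zero =>
    intro μ hμ f hf
    simp [lintegral_const, Measure.pi_univ]
  | succ n ih =>
    intro μ hμ f hf
    have hmp := (measurePreserving_piFinSuccAbove μ 0).symm
    rw [← hmp.lintegral_comp (by fun_prop)]
    have : ∀ (y : ℝ × (Fin n → ℝ)),
        (∏ i, f i (((MeasurableEquiv.piFinSuccAbove (fun _ => ℝ) 0).symm y) i))
          = f 0 y.1 * ∏ j, f j.succ (y.2 j) := by
      intro y
      rw [Fin.prod_univ_succ]
      simp [MeasurableEquiv.piFinSuccAbove_symm_apply, Fin.zero_succAbove]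
    simp_rw [this, Fin.zero_succAbove]
    rw [lintegral_prod_mul (μ := μ 0) (ν := Measure.pi fun j => μ j.succ)
      (f := f 0) (g := fun b : Fin n → ℝ => ∏ j : Fin n, f (Fin.succ j) (b j))
      (hf 0).aemeasurable
      (Finset.measurable_prod _ (fun j _ => (hf _).comp (measurable_pi_apply j))).aemeasurable]
    rw [Fin.prod_univ_succ]
    congr 1
    exact ih (fun j => μ j.succ) (fun j => hμ _) (fun j => hf _)

lemma pi_gaussian_shift {n : ℕ} (m c : Fin n → ℝ) {v : ℝ≥0} (hv : v ≠ 0) :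
    Measure.pi (fun i => gaussianReal (m i + c i) v) =
      (Measure.pi fun i => gaussianReal (m i) v).withDensity
        (fun y => ∏ i, ENNReal.ofReal (rexp ((c i * (y i - m i) - c i ^ 2 / 2) / v))) := by
  set g : Fin n → ℝ → ℝ≥0∞ :=
    fun i t => ENNReal.ofReal (rexp ((c i * (t - m i) - c i ^ 2 / 2) / v)) with hg
  have hgm : ∀ i, Measurable (g i) := by
    intro i
    apply Measurable.ennreal_ofReal
    fun_prop
  refine Measure.pi_eq fun s hs => ?_
  rw [withDensity_apply _ (MeasurableSet.univ_pi hs)]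
  have hind : ∀ y : Fin n → ℝ,
      (Set.pi Set.univ s).indicator (fun y => ∏ i, g i (y i)) y
        = ∏ i, (s i).indicator (g i) (y i) := by
    intro y
    by_cases hy : y ∈ Set.pi Set.univ s
    · rw [Set.indicator_of_mem hy]
      exact Finset.prod_congr rfl fun i _ =>
        (Set.indicator_of_mem (hy i (Set.mem_univ i)) _).symm
    · rw [Set.indicator_of_notMem hy]
      rw [Set.mem_univ_pi] at hy
      push_neg at hy
      obtain ⟨i, hi⟩ := hy
      exact (Finset.prod_eq_zero (Finset.mem_univ i)
        (by rw [Set.indicator_of_notMem hi])).symm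
  have hfg : (fun a : Fin n → ℝ =>
      ∏ i, ENNReal.ofReal (rexp ((c i * (a i - m i) - c i ^ 2 / 2) / v)))
        = fun a => ∏ i, g i (a i) := rfl
  rw [hfg, ← lintegral_indicator (MeasurableSet.univ_pi hs) (fun a => ∏ i, g i (a i))]
  simp_rw [hind]
  rw [lintegral_pi_prod _ (fun i => inferInstance)
    (fun i => (hgm i).indicator (hs i))]
  refine Finset.prod_congr rfl fun i _ => ?_
  rw [lintegral_indicator (hs i), gaussianReal_shift (m i) (c i) hv,
    withDensity_apply _ (hs i)]

lemma map_withDensity_equiv {α β : Type*} [MeasurableSpace α] [MeasurableSpace β]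
    (e : α ≃ᵐ β) (μ : Measure α) (g : α → ℝ≥0∞) (hg : Measurable g) :
    (μ.withDensity g).map e = (μ.map e).withDensity (fun b => g (e.symm b)) := by
  ext s hs
  rw [Measure.map_apply e.measurable hs, withDensity_apply _ hs,
    withDensity_apply _ (e.measurable hs),
    setLIntegral_map (f := fun b => g (e.symm b)) hs (hg.comp e.symm.measurable) e.measurable]
  simp

/-- **Neyman–Pearson lemma, part (2) (Lemma 4(2) of Cohen et al.).**
If a randomized rule `h` accepts under `ν_{x,σ}` at most as often as the half-space
`S = {z : ⟨δ, z⟩ ≥ β}`, then it also does so under `ν_{x+δ,σ}`. -/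
theorem neyman_pearson_ge {d : ℕ} (σ : ℝ) (hσ : 0 < σ)
    (x δ : EuclideanSpace ℝ (Fin d)) (hδ : δ ≠ 0) (β : ℝ)
    (S : Set (EuclideanSpace ℝ (Fin d)))
    (hS : S = {z | β ≤ (inner ℝ δ z : ℝ)})
    (h : EuclideanSpace ℝ (Fin d) → ℝ) (hmeas : Measurable h)
    (h01 : ∀ z, h z ∈ Set.Icc (0 : ℝ) 1)
    (hX : ∫ z, h z ∂(gaussianVec x σ) ≤ ((gaussianVec x σ) S).toReal) :
    ∫ z, h z ∂(gaussianVec (x + δ) σ) ≤ ((gaussianVec (x + δ) σ) S).toReal := by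
  classical
  set v : ℝ≥0 := (σ ^ 2).toNNReal with hvdef
  have hvr : (v : ℝ) = σ ^ 2 := Real.coe_toNNReal _ (sq_nonneg σ)
  have hvpos : (0 : ℝ) < (v : ℝ) := by rw [hvr]; positivity
  have hv : v ≠ 0 := by
    intro hc
    rw [hc] at hvpos
    simp at hvpos
  set e := (MeasurableEquiv.toLp 2 (Fin d → ℝ)).symm with he
  have hprob : ∀ m : EuclideanSpace ℝ (Fin d),
      IsProbabilityMeasure (gaussianVec m σ) := by
    intro m
    rw [gaussianVec]
    exact Measure.isProbabilityMeasure_map (e.symm.measurable.aemeasurable)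
  haveI h1p := hprob x
  haveI h2p := hprob (x + δ)
  set ν₁ := gaussianVec x σ with hν₁
  set ν₂ := gaussianVec (x + δ) σ with hν₂
  set A : EuclideanSpace ℝ (Fin d) → ℝ := fun z => ∑ i, δ i * z i with hA
  set C : ℝ := ∑ i, (δ i * x i + δ i ^ 2 / 2) with hC
  set L : EuclideanSpace ℝ (Fin d) → ℝ := fun z => rexp ((A z - C) / v) with hLdef
  have hLpos : ∀ z, 0 < L z := fun z => Real.exp_pos _
  have hmeasA : Measurable A := by
    have : A = (fun y : Fin d → ℝ => ∑ i, δ i * y i) ∘ e := rfl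
    rw [this]
    exact (Finset.measurable_sum _ fun i _ =>
      by fun_prop).comp e.measurable
  have hmeasL : Measurable L :=
    Real.measurable_exp.comp ((hmeasA.sub_const C).div_const _)
  -- S in terms of A
  have hSA : S = {z | β ≤ A z} := by
    rw [hS]
    ext z
    simp only [Set.mem_setOf_eq, hA]
    rw [PiLp.inner_apply]
    simp [RCLike.inner_apply, conj_trivial, mul_comm]
  have hSm : MeasurableSet S := by
    rw [hSA]
    exact measurableSet_le measurable_const hmeasA
  -- density identity
  have hwd : ν₂ = ν₁.withDensity (fun z => ENNReal.ofReal (L z)) := by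
    rw [hν₁, hν₂, gaussianVec, gaussianVec]
    have hxd : (fun i => gaussianReal ((x + δ) i) ((σ ^ 2).toNNReal))
        = fun i => gaussianReal ((fun j => x j) i + (fun j => δ j) i) v := by
      funext i
      simp [PiLp.add_apply, hvdef]
    rw [hxd, pi_gaussian_shift (fun j => x j) (fun j => δ j) hv,
      map_withDensity_equiv (MeasurableEquiv.toLp 2 (Fin d → ℝ)) _ _
        (by
          apply Finset.measurable_prod
          intro i _
          apply Measurable.ennreal_ofReal
          fun_prop)]
    congr 1
    funext z
    have hz : ∀ i, ((MeasurableEquiv.toLp 2 (Fin d → ℝ)).symm z) i = z i := by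
      intro i
      rfl
    simp only [hz]
    rw [← ENNReal.ofReal_prod_of_nonneg (fun i _ => (Real.exp_pos _).le),
      ← Real.exp_sum]
    congr 2
    rw [← Finset.sum_div]
    congr 1
    rw [hA, hC, ← Finset.sum_sub_distrib]
    exact Finset.sum_congr rfl fun i _ => by ring
  -- total mass
  have hone : ∫⁻ z, ENNReal.ofReal (L z) ∂ν₁ = 1 := by
    have hu : ν₂ Set.univ = 1 := measure_univ
    rw [hwd, withDensity_apply _ MeasurableSet.univ, Measure.restrict_univ] at hu
    exact hu
  have hLint : Integrable L ν₁ := by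
    refine ⟨hmeasL.aestronglyMeasurable, ?_⟩
    rw [hasFiniteIntegral_iff_ofReal (ae_of_all _ fun z => (hLpos z).le), hone]
    exact ENNReal.one_lt_top
  -- conversion of integrals
  have hconv : ∀ f : EuclideanSpace ℝ (Fin d) → ℝ, Measurable f →
      ∫ z, f z ∂ν₂ = ∫ z, L z * f z ∂ν₁ := by
    intro f hf
    rw [hwd]
    have hd : (fun z => ENNReal.ofReal (L z))
        = fun z => ((Real.toNNReal (L z) : ℝ≥0) : ℝ≥0∞) := rfl
    rw [hd, integral_withDensity_eq_integral_smul hmeasL.real_toNNReal f]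
    congr 1
    funext z
    rw [NNReal.smul_def, Real.coe_toNNReal _ (hLpos z).le]
    rfl
  set iS : EuclideanSpace ℝ (Fin d) → ℝ := S.indicator 1 with hiS
  have hmeasiS : Measurable iS := measurable_const.indicator hSm
  have hiS01 : ∀ z, iS z = 0 ∨ iS z = 1 := by
    intro z
    by_cases hz : z ∈ S
    · right; simp [hiS, Set.indicator_of_mem hz]
    · left; simp [hiS, Set.indicator_of_notMem hz]
  -- threshold
  set t : ℝ := rexp ((β - C) / v) with ht
  have htpos : 0 < t := Real.exp_pos _
  have hmem : ∀ z ∈ S, t ≤ L z := by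
    intro z hz
    rw [hSA] at hz
    simp only [Set.mem_setOf_eq] at hz
    exact Real.exp_le_exp.2 ((div_le_div_iff_of_pos_right hvpos).2 (by linarith))
  have hnmem : ∀ z ∉ S, L z ≤ t := by
    intro z hz
    rw [hSA] at hz
    simp only [Set.mem_setOf_eq, not_le] at hz
    exact Real.exp_le_exp.2 ((div_le_div_iff_of_pos_right hvpos).2 (by linarith [hz]))
  -- integrability
  have hint_h : Integrable h ν₁ := by
    refine (integrable_const (1 : ℝ)).mono' hmeas.aestronglyMeasurable
      (ae_of_all _ fun z => ?_)
    have := h01 z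
    rw [Real.norm_eq_abs, abs_le]
    exact ⟨by linarith [this.1], this.2⟩
  have hint_iS : Integrable iS ν₁ := (integrable_const (1 : ℝ)).indicator hSm
  have hint_Lh : Integrable (fun z => L z * h z) ν₁ := by
    refine hLint.mono' (hmeasL.mul hmeas).aestronglyMeasurable
      (ae_of_all _ fun z => ?_)
    rw [Real.norm_eq_abs, abs_mul, abs_of_pos (hLpos z)]
    have := h01 z
    nlinarith [abs_le.2 ⟨by linarith [this.1], this.2⟩, (hLpos z).le,
      abs_nonneg (h z)]
  have hint_LiS : Integrable (fun z => L z * iS z) ν₁ := by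
    refine hLint.mono' (hmeasL.mul hmeasiS).aestronglyMeasurable
      (ae_of_all _ fun z => ?_)
    rw [Real.norm_eq_abs, abs_mul, abs_of_pos (hLpos z)]
    rcases hiS01 z with hz | hz <;> rw [hz] <;> simp [(hLpos z).le]
  -- pointwise inequality
  have hpt : ∀ z, t * iS z - t * h z ≤ L z * iS z - L z * h z := by
    intro z
    by_cases hz : z ∈ S
    · have h1 : iS z = 1 := by simp [hiS, Set.indicator_of_mem hz]
      have h2 := hmem z hz
      have h3 := (h01 z).2
      rw [h1]
      nlinarith [mul_nonneg (sub_nonneg.2 h2) (sub_nonneg.2 h3)]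
    · have h1 : iS z = 0 := by simp [hiS, Set.indicator_of_notMem hz]
      have h2 := hnmem z hz
      have h3 := (h01 z).1
      rw [h1]
      nlinarith [mul_nonneg (sub_nonneg.2 h2) h3]
  have hmono : ∫ z, (t * iS z - t * h z) ∂ν₁ ≤ ∫ z, (L z * iS z - L z * h z) ∂ν₁ :=
    integral_mono ((hint_iS.const_mul t).sub (hint_h.const_mul t))
      (hint_LiS.sub hint_Lh) hpt
  rw [integral_sub (hint_iS.const_mul t) (hint_h.const_mul t),
    integral_sub hint_LiS hint_Lh, integral_const_mul, integral_const_mul] at hmono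
  -- rewrite hX
  have hXiS : ∫ z, h z ∂ν₁ ≤ ∫ z, iS z ∂ν₁ := by
    rw [hiS, integral_indicator_one hSm]
    exact hX
  have hlhs : ∫ z, h z ∂ν₂ = ∫ z, L z * h z ∂ν₁ := hconv h hmeas
  have hrhs : (ν₂ S).toReal = ∫ z, L z * iS z ∂ν₁ := by
    rw [← measureReal_def, ← integral_indicator_one hSm (μ := ν₂), ← hiS]
    exact hconv iS hmeasiS
  rw [hlhs, hrhs]
  have h0 : 0 ≤ t * ∫ z, iS z ∂ν₁ - t * ∫ z, h z ∂ν₁ := by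
    have := mul_le_mul_of_nonneg_left hXiS htpos.le
    linarith
  linarith
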